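/- The only integer solutions (u, v, w) of w² = u·v·(u² − v²) are those with w = 0, namely (u, v, w) = (a, a, 0), (a, −a, 0), (0, v, 0), or (u, 0, 0). -/

import Mathlib

private lemma pos_sq' {a a0 : ℤ} (h : a = a0 ^ 2 ∨ a = -a0 ^ 2) (ha : 0 < a) : a = a0 ^ 2 := by
  rcases h with h | h
  · exact h
  · exfalso; nlinarith [sq_nonneg a0]

private lemma natAbs_lt_of_sq_lt {a b : ℤ} (h : a ^ 2 < b ^ 2) : a.natAbs < b.natAbs := by
  have h1 : |a| < |b| := by nlinarith [sq_abs a, sq_abs b, abs_nonneg a, abs_nonneg b]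
  rwa [Int.abs_eq_natAbs, Int.abs_eq_natAbs, Int.ofNat_lt] at h1

private lemma coprime_y_z {x y z : ℤ} (hc : IsCoprime x y) (h : x ^ 4 = y ^ 4 + z ^ 2) :
    IsCoprime y z := by
  have h1 : IsCoprime y (x ^ 4) := hc.symm.pow_right
  have h2 : IsCoprime y (x ^ 4 + y * (-(y ^ 3))) := h1.add_mul_left_right _
  have h3 : x ^ 4 + y * (-(y ^ 3)) = z ^ 2 := by linear_combination h
  rw [h3] at h2
  exact h2.of_isCoprime_of_dvd_right (dvd_pow_self z two_ne_zero)

/-- the second descent step: `x^2 = (a^2)^2 + (2*b^2)^2` leads to a smaller solution. -/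
private lemma stepC (N : ℕ)
    (ih : ∀ x y z : ℤ, x.natAbs ≤ N → Int.gcd x y = 1 → x ^ 4 = y ^ 4 + z ^ 2 →
      y ≠ 0 → z ≠ 0 → False)
    (x a b : ℤ) (hxN : x.natAbs ≤ N + 1) (hx : 0 < x) (ha : a ≠ 0) (hb : b ≠ 0)
    (hg : Int.gcd (a ^ 2) (2 * b ^ 2) = 1)
    (heq : x ^ 2 = (a ^ 2) ^ 2 + (2 * b ^ 2) ^ 2) : False := by
  have hodd : a ^ 2 % 2 = 1 := by
    rcases Int.even_or_odd a with he | ho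
    · exfalso
      have h2 : (2 : ℤ) ∣ Int.gcd (a ^ 2) (2 * b ^ 2) := by
        refine Int.dvd_coe_gcd ?_ (dvd_mul_right 2 _)
        exact dvd_pow he.two_dvd two_ne_zero
      rw [hg] at h2
      norm_num at h2
    · exact Int.odd_iff.mp (ho.pow)
  have ht : PythagoreanTriple (a ^ 2) (2 * b ^ 2) x := by
    show (a ^ 2) * (a ^ 2) + (2 * b ^ 2) * (2 * b ^ 2) = x * x
    linear_combination -heq
  obtain ⟨r, s, h1, h2, h3, h4, h5, h6⟩ := ht.coprime_classification' hg hodd hx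
  have hbs : b ^ 2 = r * s := by
    have h2' : 2 * b ^ 2 = 2 * (r * s) := by linear_combination h2
    exact mul_left_cancel₀ two_ne_zero h2'
  have hrs : 0 < r * s := by rw [← hbs]; positivity
  have hrpos : 0 < r := by
    rcases lt_or_eq_of_le h6 with h | h
    · exact h
    · exfalso; rw [← h] at hrs; simp at hrs
  have hspos : 0 < s := by
    rcases mul_pos_iff.mp hrs with ⟨_, h⟩ | ⟨h, _⟩
    · exact h
    · exact absurd hrpos (not_lt.mpr h.le)
  have hcop : IsCoprime r s := Int.isCoprime_iff_gcd_eq_one.mpr h4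
  obtain ⟨e, he⟩ := Int.sq_of_isCoprime hcop hbs.symm
  have he' : r = e ^ 2 := pos_sq' he hrpos
  obtain ⟨f, hf⟩ := Int.sq_of_isCoprime hcop.symm (by rw [mul_comm]; exact hbs.symm)
  have hf' : s = f ^ 2 := pos_sq' hf hspos
  have hf0 : f ≠ 0 := by
    intro h0; rw [h0] at hf'; simp at hf'; omega
  have hef : IsCoprime e f := by
    have h1' := hcop; rw [he', hf'] at h1'
    exact (h1'.of_isCoprime_of_dvd_left (dvd_pow_self e two_ne_zero)).of_isCoprime_of_dvd_right
      (dvd_pow_self f two_ne_zero)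
  have heq2 : e ^ 4 = f ^ 4 + a ^ 2 := by
    rw [he', hf'] at h1; linear_combination -h1
  have hlt : e.natAbs < x.natAbs := by
    apply natAbs_lt_of_sq_lt
    have h1 : e ^ 2 < x := by rw [← he', h3]; nlinarith
    nlinarith
  exact ih e f a (by omega) (Int.isCoprime_iff_gcd_eq_one.mp hef) heq2 hf0 ha

private lemma descent_aux (N : ℕ)
    (ih : ∀ x y z : ℤ, x.natAbs ≤ N → Int.gcd x y = 1 → x ^ 4 = y ^ 4 + z ^ 2 →
      y ≠ 0 → z ≠ 0 → False)
    (x y z : ℤ) (hxN : x.natAbs ≤ N + 1) (hc : Int.gcd x y = 1)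
    (h : x ^ 4 = y ^ 4 + z ^ 2) (hx : 0 < x) (hy : 0 < y) (hz : 0 < z) : False := by
  have hcop : IsCoprime x y := Int.isCoprime_iff_gcd_eq_one.mpr hc
  have hyz : IsCoprime y z := coprime_y_z hcop h
  -- x is odd
  have hxo : Odd x := by
    rcases Int.even_or_odd x with hxe | hxo
    · exfalso
      rcases Int.even_or_odd y with hye | hyo
      · have h2 : (2 : ℤ) ∣ Int.gcd x y := Int.dvd_coe_gcd hxe.two_dvd hye.two_dvd
        rw [hc] at h2; norm_num at h2
      · obtain ⟨k, hk⟩ := hxe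
        obtain ⟨l, hl⟩ := hyo
        rw [hk, hl] at h
        have key : ∀ k l c : ZMod 4, (k + k) ^ 4 ≠ (2 * l + 1) ^ 4 + c ^ 2 := by decide
        have hcast := congrArg (fun t : ℤ => (t : ZMod 4)) h
        push_cast at hcast
        exact key k l z hcast
    · exact hxo
  rcases Int.even_or_odd y with hye | hyo
  · -- y even, z odd
    have hzo : Odd z := by
      rcases Int.even_or_odd z with hze | hzo
      · exfalso
        obtain ⟨yy, hyy⟩ := hye
        obtain ⟨zz, hzz⟩ := hze
        have hev : Even (x ^ 4) := by
          rw [h]; exact ⟨8 * yy ^ 4 + 2 * zz ^ 2, by rw [hyy, hzz]; ring⟩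
        exact (Int.not_odd_iff_even.mpr hev) (hxo.pow)
      · exact hzo
    have hczy : Int.gcd z (y ^ 2) = 1 :=
      Int.isCoprime_iff_gcd_eq_one.mp (hyz.symm.pow_right)
    have ht : PythagoreanTriple z (y ^ 2) (x ^ 2) := by
      show z * z + (y ^ 2) * (y ^ 2) = (x ^ 2) * (x ^ 2)
      linear_combination -h
    obtain ⟨m, n, h1, h2, h3, h4, h5, h6⟩ :=
      ht.coprime_classification' hczy (Int.odd_iff.mp hzo) (by positivity)
    have hmn : 0 < m * n := by nlinarith
    have hmpos : 0 < m := by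
      rcases lt_or_eq_of_le h6 with hh | hh
      · exact hh
      · exfalso; rw [← hh] at hmn; simp at hmn
    have hnpos : 0 < n := by
      rcases mul_pos_iff.mp hmn with ⟨_, hh⟩ | ⟨hh, _⟩
      · exact hh
      · exact absurd hmpos (not_lt.mpr hh.le)
    have hmncop : IsCoprime m n := Int.isCoprime_iff_gcd_eq_one.mpr h4
    obtain ⟨y₁, hy1⟩ := hye
    rcases h5 with ⟨hm0, hn1⟩ | ⟨hm1, hn0⟩
    · -- m even, n odd
      obtain ⟨k, hk⟩ := Int.even_iff.mpr hm0
      have hy1sq : y₁ ^ 2 = k * n := by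
        have h4' : (4 : ℤ) * y₁ ^ 2 = 4 * (k * n) := by
          rw [hy1, hk] at h2; linear_combination h2
        exact mul_left_cancel₀ (by norm_num) h4'
      have hkpos : 0 < k := by omega
      have hkn : IsCoprime k n :=
        hmncop.of_isCoprime_of_dvd_left ⟨2, by omega⟩
      obtain ⟨p, hp⟩ := Int.sq_of_isCoprime hkn hy1sq.symm
      have hp' : k = p ^ 2 := pos_sq' hp hkpos
      obtain ⟨q, hq⟩ := Int.sq_of_isCoprime hkn.symm (by rw [mul_comm]; exact hy1sq.symm)
      have hq' : n = q ^ 2 := pos_sq' hq hnpos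
      have hp0 : p ≠ 0 := by intro h0; rw [h0] at hp'; simp at hp'; omega
      have hq0 : q ≠ 0 := by intro h0; rw [h0] at hq'; simp at hq'; omega
      have hm2 : m = 2 * p ^ 2 := by omega
      have hgcd : Int.gcd (q ^ 2) (2 * p ^ 2) = 1 := by
        rw [← hq', ← hm2, Int.gcd_comm]; exact h4
      have heqC : x ^ 2 = (q ^ 2) ^ 2 + (2 * p ^ 2) ^ 2 := by
        rw [← hq', ← hm2]; linarith [h3]
      exact stepC N ih x q p hxN hx hq0 hp0 hgcd heqC
    · -- m odd, n even
      obtain ⟨k, hk⟩ := Int.even_iff.mpr hn0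
      have hy1sq : y₁ ^ 2 = m * k := by
        have h4' : (4 : ℤ) * y₁ ^ 2 = 4 * (m * k) := by
          rw [hy1, hk] at h2; linear_combination h2
        exact mul_left_cancel₀ (by norm_num) h4'
      have hkpos : 0 < k := by omega
      have hmk : IsCoprime m k :=
        hmncop.of_isCoprime_of_dvd_right ⟨2, by omega⟩
      obtain ⟨p, hp⟩ := Int.sq_of_isCoprime hmk hy1sq.symm
      have hp' : m = p ^ 2 := pos_sq' hp hmpos
      obtain ⟨q, hq⟩ := Int.sq_of_isCoprime hmk.symm (by rw [mul_comm]; exact hy1sq.symm)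
      have hq' : k = q ^ 2 := pos_sq' hq hkpos
      have hp0 : p ≠ 0 := by intro h0; rw [h0] at hp'; simp at hp'; omega
      have hq0 : q ≠ 0 := by intro h0; rw [h0] at hq'; simp at hq'; omega
      have hn2 : n = 2 * q ^ 2 := by omega
      have hgcd : Int.gcd (p ^ 2) (2 * q ^ 2) = 1 := by
        rw [← hp', ← hn2]; exact h4
      have heqC : x ^ 2 = (p ^ 2) ^ 2 + (2 * q ^ 2) ^ 2 := by
        rw [← hp', ← hn2]; linarith [h3]
      exact stepC N ih x p q hxN hx hp0 hq0 hgcd heqC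
  · -- y odd
    have hcyz : Int.gcd (y ^ 2) z = 1 :=
      Int.isCoprime_iff_gcd_eq_one.mp (hyz.pow_left)
    have ht : PythagoreanTriple (y ^ 2) z (x ^ 2) := by
      show (y ^ 2) * (y ^ 2) + z * z = (x ^ 2) * (x ^ 2)
      linear_combination -h
    obtain ⟨m, n, h1, h2, h3, h4, h5, h6⟩ :=
      ht.coprime_classification' hcyz (Int.odd_iff.mp hyo.pow) (by positivity)
    have hn0 : n ≠ 0 := by
      intro h0; rw [h0] at h2; simp at h2; omega
    have hnew : m ^ 4 = n ^ 4 + (x * y) ^ 2 := by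
      linear_combination (-(x ^ 2)) * h1 - (m ^ 2 - n ^ 2) * h3
    have hlt : m.natAbs < x.natAbs := by
      apply natAbs_lt_of_sq_lt
      have hn2 : 0 < n ^ 2 := by positivity
      nlinarith [h3]
    exact ih m n (x * y) (by omega) h4 hnew hn0 (mul_ne_zero hx.ne' hy.ne')

private lemma no_sol : ∀ (N : ℕ) (x y z : ℤ), x.natAbs ≤ N → Int.gcd x y = 1 →
    x ^ 4 = y ^ 4 + z ^ 2 → y ≠ 0 → z ≠ 0 → False := by
  intro N
  induction N with
  | zero =>
    intro x y z hxN hc h hy hz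
    have hx0 : x = 0 := Int.natAbs_eq_zero.mp (Nat.le_zero.mp hxN)
    rw [hx0] at h
    have h1 : 0 < y ^ 4 := by positivity
    nlinarith [sq_nonneg z]
  | succ N ih =>
    intro x y z hxN hc h hy hz
    have hx : x ≠ 0 := by
      intro h0; rw [h0] at h
      have h1 : 0 < y ^ 4 := by positivity
      nlinarith [sq_nonneg z]
    have habs : |x| ^ 4 = |y| ^ 4 + |z| ^ 2 := by
      rw [← abs_pow, ← abs_pow, ← abs_pow, abs_of_nonneg (a := x ^ 4) (by positivity),
        abs_of_nonneg (a := y ^ 4) (by positivity), abs_of_nonneg (a := z ^ 2) (by positivity)]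
      exact h
    have hgabs : Int.gcd |x| |y| = 1 := by
      simpa [Int.gcd, Int.natAbs_abs] using hc
    have hNabs : (|x|).natAbs ≤ N + 1 := by rwa [Int.natAbs_abs]
    exact descent_aux N ih |x| |y| |z| hNabs hgabs habs
      (abs_pos.mpr hx) (abs_pos.mpr hy) (abs_pos.mpr hz)

private lemma lemB (u v w : ℤ) (hu : 0 < u) (hv : 0 < v) (hc : Int.gcd u v = 1) (hw : w ≠ 0)
    (h : w ^ 2 = u * v * (u ^ 2 - v ^ 2)) : False := by
  have hw2 : 0 < w ^ 2 := lt_of_le_of_ne (sq_nonneg w) (Ne.symm (pow_ne_zero 2 hw))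
  have huv : 0 < u * v := mul_pos hu hv
  have hd : 0 < u ^ 2 - v ^ 2 := by nlinarith
  have hcop : IsCoprime u v := Int.isCoprime_iff_gcd_eq_one.mpr hc
  have c1 : IsCoprime u (u ^ 2 - v ^ 2) := by
    have h1 : IsCoprime u (-(v ^ 2) + u * u) :=
      ((hcop.pow_right (n := 2)).neg_right).add_mul_left_right u
    have h2 : -(v ^ 2) + u * u = u ^ 2 - v ^ 2 := by ring
    rwa [h2] at h1
  have c2 : IsCoprime v (u ^ 2 - v ^ 2) := by
    have h1 : IsCoprime v (u ^ 2 + v * (-v)) :=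
      (hcop.symm.pow_right (n := 2)).add_mul_left_right (-v)
    have h2 : u ^ 2 + v * (-v) = u ^ 2 - v ^ 2 := by ring
    rwa [h2] at h1
  have c3 : IsCoprime (u * v) (u ^ 2 - v ^ 2) := c1.mul_left c2
  obtain ⟨s, hs⟩ := Int.sq_of_isCoprime c3 (show (u * v) * (u ^ 2 - v ^ 2) = w ^ 2 by linarith)
  have hs' : u * v = s ^ 2 := pos_sq' hs huv
  obtain ⟨t, htt⟩ := Int.sq_of_isCoprime c3.symm
    (show (u ^ 2 - v ^ 2) * (u * v) = w ^ 2 by linarith [h, mul_comm (u * v) (u ^ 2 - v ^ 2)])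
  have ht' : u ^ 2 - v ^ 2 = t ^ 2 := pos_sq' htt hd
  obtain ⟨a, haa⟩ := Int.sq_of_isCoprime hcop hs'
  have ha' : u = a ^ 2 := pos_sq' haa hu
  obtain ⟨b, hbb⟩ := Int.sq_of_isCoprime hcop.symm (by rw [mul_comm]; exact hs')
  have hb' : v = b ^ 2 := pos_sq' hbb hv
  have hab : IsCoprime a b := by
    have h1 := hcop; rw [ha', hb'] at h1
    exact (h1.of_isCoprime_of_dvd_left (dvd_pow_self a two_ne_zero)).of_isCoprime_of_dvd_right
      (dvd_pow_self b two_ne_zero)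
  have heq : a ^ 4 = b ^ 4 + t ^ 2 := by
    rw [ha', hb'] at ht'; linear_combination ht'
  have hb0 : b ≠ 0 := by intro h0; rw [h0] at hb'; simp at hb'; omega
  have ht0 : t ≠ 0 := by intro h0; rw [h0] at ht'; simp at ht'; omega
  exact no_sol a.natAbs a b t le_rfl (Int.isCoprime_iff_gcd_eq_one.mp hab) heq hb0 ht0

theorem stmt_5 (u v w : ℤ) (h : w^2 = u * v * (u^2 - v^2)) :
    w = 0 ∧ (v = u ∨ v = -u ∨ u = 0 ∨ v = 0) := by
  have hw0 : w = 0 := by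
    by_contra hw
    have hu0 : u ≠ 0 := by
      rintro rfl
      apply hw
      have : w ^ 2 = 0 := by linear_combination h
      exact pow_eq_zero_iff two_ne_zero |>.mp this
    have hv0 : v ≠ 0 := by
      rintro rfl
      apply hw
      have : w ^ 2 = 0 := by linear_combination h
      exact pow_eq_zero_iff two_ne_zero |>.mp this
    have hgpos : 0 < Int.gcd u v :=
      Nat.pos_of_ne_zero (fun h0 => hu0 (Int.gcd_eq_zero_iff.mp h0).1)
    set d : ℤ := (Int.gcd u v : ℤ) with hdd
    have hdpos : 0 < d := by rw [hdd]; exact_mod_cast hgpos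
    obtain ⟨u₁, hu1⟩ : d ∣ u := Int.gcd_dvd_left u v
    obtain ⟨v₁, hv1⟩ : d ∣ v := Int.gcd_dvd_right u v
    have hu1' : u / d = u₁ := by rw [hu1]; exact Int.mul_ediv_cancel_left _ hdpos.ne'
    have hv1' : v / d = v₁ := by rw [hv1]; exact Int.mul_ediv_cancel_left _ hdpos.ne'
    have hg1 : Int.gcd u₁ v₁ = 1 := by
      rw [← hu1', ← hv1']
      exact Int.gcd_div_gcd_div_gcd hgpos
    have hdvd : (d ^ 2) ^ 2 ∣ w ^ 2 := by
      refine ⟨u₁ * v₁ * (u₁ ^ 2 - v₁ ^ 2), ?_⟩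
      rw [hu1, hv1] at h; linear_combination h
    have hd2 : d ^ 2 ∣ w := (Int.pow_dvd_pow_iff two_ne_zero).mp hdvd
    obtain ⟨w₁, hw1⟩ := hd2
    have heq1 : w₁ ^ 2 = u₁ * v₁ * (u₁ ^ 2 - v₁ ^ 2) := by
      have h' : d ^ 4 * w₁ ^ 2 = d ^ 4 * (u₁ * v₁ * (u₁ ^ 2 - v₁ ^ 2)) := by
        rw [hu1, hv1, hw1] at h; linear_combination h
      exact mul_left_cancel₀ (pow_ne_zero 4 hdpos.ne') h'
    have hw10 : w₁ ≠ 0 := by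
      intro h0; rw [h0, mul_zero] at hw1; exact hw hw1
    have hu10 : u₁ ≠ 0 := by rintro rfl; rw [mul_zero] at hu1; exact hu0 hu1
    have hv10 : v₁ ≠ 0 := by rintro rfl; rw [mul_zero] at hv1; exact hv0 hv1
    have hgcdneg : ∀ a b : ℤ, Int.gcd a b = 1 → Int.gcd (-a) b = 1 := by
      intro a b hab; simpa [Int.gcd] using hab
    rcases hu10.lt_or_gt with hun | hup
    · rcases hv10.lt_or_gt with hvn | hvp
      · exact lemB (-u₁) (-v₁) w₁ (by omega) (by omega)
          (by rw [Int.gcd_comm]; apply hgcdneg; rw [Int.gcd_comm]; apply hgcdneg; exact hg1)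
          hw10 (by linear_combination heq1)
      · exact lemB v₁ (-u₁) w₁ hvp (by omega)
          (by rw [Int.gcd_comm]; apply hgcdneg; exact hg1)
          hw10 (by linear_combination heq1)
    · rcases hv10.lt_or_gt with hvn | hvp
      · exact lemB (-v₁) u₁ w₁ (by omega) hup
          (by apply hgcdneg; rw [Int.gcd_comm]; exact hg1)
          hw10 (by linear_combination heq1)
      · exact lemB u₁ v₁ w₁ hup hvp hg1 hw10 heq1
  refine ⟨hw0, ?_⟩
  rw [hw0] at h
  have h0 : u * (v * ((u - v) * (u + v))) = 0 := by linear_combination -h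
  rcases mul_eq_zero.mp h0 with h1 | h1
  · tauto
  rcases mul_eq_zero.mp h1 with h2 | h2
  · tauto
  rcases mul_eq_zero.mp h2 with h3 | h3 <;> [left; right] <;> omega
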